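/- Let D be a dyadic grid on a measure space X (a collection of measurable 'cubes' such that any two are either disjoint or nested), and let S ⊆ D be a sparse family: there exist pairwise disjoint measurable sets E(Q) ⊆ Q with μ(Q) ≤ 2 μ(E(Q)) for each Q ∈ S. Then the sparse operator T^S f = Σ_{Q∈S} (μ(Q)^{-1} ∫_Q f dμ) χ_Q is bounded on L²(μ): ‖T^S f‖_{L²(μ)} ≤ C ‖f‖_{L²(μ)} for an absolute constant C, for all nonnegative f ∈ L²(μ). -/

import Mathlib

open MeasureTheory Real Set Filter

/-- The normalized Luxemburg (Orlicz) norm of `v` over the set `E`: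
`inf { λ > 0 : μ(E)⁻¹ ∫_E A(|v|/λ) dμ ≤ 1 }`. -/
noncomputable def luxNorm {X : Type*} [MeasurableSpace X] (μ : Measure X)
    (A : ℝ → ℝ) (E : Set X) (v : X → ℝ) : ℝ :=
  sInf {l : ℝ | 0 < l ∧ ∫⁻ x in E, ENNReal.ofReal (A (|v x| / l)) ∂μ ≤ μ E}

/-- A Young function: continuous, convex, increasing on `[0,∞)`, vanishing at `0`,
with superlinear growth at infinity. -/
def IsYoung (A : ℝ → ℝ) : Prop :=
  ContinuousOn A (Set.Ici 0) ∧ ConvexOn ℝ (Set.Ici 0) A ∧ MonotoneOn A (Set.Ici 0) ∧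
    A 0 = 0 ∧ Filter.Tendsto (fun t => A t / t) Filter.atTop Filter.atTop

open scoped ENNReal

namespace SparseAux

variable {X : Type} [MeasurableSpace X]

open scoped Classical in
/-- Dyadic maximal function relative to a finite family of cubes. -/
noncomputable def mx (μ : Measure X) (F : Finset (Set X)) (φ : X → ℝ≥0∞) (x : X) : ℝ≥0∞ :=
  F.sup fun Q => if x ∈ Q then (∫⁻ y in Q, φ y ∂μ) / μ Q else 0

lemma measurable_mx (μ : Measure X) (F : Finset (Set X)) (hmeas : ∀ Q ∈ F, MeasurableSet Q)
    (φ : X → ℝ≥0∞) : Measurable (mx μ F φ) := by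
  classical
  induction F using Finset.induction with
  | empty =>
    have : mx μ ∅ φ = fun _ => 0 := funext fun x => by simp [mx]
    rw [this]; exact measurable_const
  | @insert Q s hQs ih =>
    have h1 : Measurable fun x => if x ∈ Q then (∫⁻ y in Q, φ y ∂μ) / μ Q else 0 := by
      have : (fun x => if x ∈ Q then (∫⁻ y in Q, φ y ∂μ) / μ Q else 0)
          = Q.indicator (fun _ => (∫⁻ y in Q, φ y ∂μ) / μ Q) := by
        funext x; by_cases hx : x ∈ Q <;> simp [hx, Set.indicator_apply]
      rw [this]
      exact Measurable.indicator measurable_const (hmeas Q (Finset.mem_insert_self Q s))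
    have h2 : Measurable (mx μ s φ) :=
      ih fun R hR => hmeas R (Finset.mem_insert_of_mem hR)
    have : mx μ (insert Q s) φ = fun x =>
        (if x ∈ Q then (∫⁻ y in Q, φ y ∂μ) / μ Q else 0) ⊔ mx μ s φ x := by
      funext x; simp [mx, Finset.sup_insert]
    rw [this]
    exact h1.sup h2

lemma mx_le_of_mem {μ : Measure X} {F : Finset (Set X)} {φ : X → ℝ≥0∞} {Q : Set X}
    (hQ : Q ∈ F) {x : X} (hx : x ∈ Q) :
    (∫⁻ y in Q, φ y ∂μ) / μ Q ≤ mx μ F φ x := by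
  classical
  have := Finset.le_sup (f := fun Q => if x ∈ Q then (∫⁻ y in Q, φ y ∂μ) / μ Q else 0) hQ
  simp only [hx, ↓reduceIte] at this
  exact this

/-- Weak type bound for the finite dyadic maximal function (with truncation). -/
lemma mx_weak (μ : Measure X) (F : Finset (Set X)) (hmeas : ∀ Q ∈ F, MeasurableSet Q)
    (hpos : ∀ Q ∈ F, 0 < μ Q) (hfin : ∀ Q ∈ F, μ Q < ⊤)
    (hdy : ∀ Q ∈ F, ∀ Q' ∈ F, Q ∩ Q' = ∅ ∨ Q ⊆ Q' ∨ Q' ⊆ Q)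
    (φ : X → ℝ≥0∞) (hφ : Measurable φ) {t : ℝ} (ht : 0 < t) :
    μ {x | ENNReal.ofReal t < mx μ F φ x} ≤
      2 * (ENNReal.ofReal t)⁻¹ *
        ∫⁻ x in {x | ENNReal.ofReal t < 2 * φ x}, φ x ∂μ := by
  classical
  set T := ENNReal.ofReal t with hT
  have hT0 : T ≠ 0 := by
    simp only [hT, ne_eq, ENNReal.ofReal_eq_zero, not_le]; exact ht
  have hTtop : T ≠ ∞ := ENNReal.ofReal_ne_top
  set A := {x | T < 2 * φ x} with hA
  have hAmeas : MeasurableSet A := measurableSet_lt measurable_const (hφ.const_mul 2)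
  set 𝒬 := F.filter (fun Q => T < (∫⁻ y in Q, φ y ∂μ) / μ Q) with h𝒬
  set M := 𝒬.filter (fun Q => ∀ R ∈ 𝒬, Q ⊆ R → Q = R) with hM
  -- key per-cube estimate
  have key : ∀ Q ∈ 𝒬, μ Q ≤ 2 * T⁻¹ * ∫⁻ x in Q ∩ A, φ x ∂μ := by
    intro Q hQ
    have hQF : Q ∈ F := (Finset.mem_filter.1 hQ).1
    have havg : T < (∫⁻ y in Q, φ y ∂μ) / μ Q := (Finset.mem_filter.1 hQ).2
    have hμ0 : μ Q ≠ 0 := (hpos Q hQF).ne'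
    have hμt : μ Q ≠ ∞ := (hfin Q hQF).ne
    have h1 : T * μ Q < ∫⁻ y in Q, φ y ∂μ :=
      (ENNReal.lt_div_iff_mul_lt (Or.inl hμ0) (Or.inl hμt)).1 havg
    have hsplit : (∫⁻ x in Q ∩ A, φ x ∂μ) + ∫⁻ x in Q \ A, φ x ∂μ = ∫⁻ y in Q, φ y ∂μ :=
      lintegral_inter_add_diff _ _ hAmeas
    have h2 : ∫⁻ x in Q \ A, φ x ∂μ ≤ T / 2 * μ Q := by
      calc ∫⁻ x in Q \ A, φ x ∂μ ≤ ∫⁻ _ in Q \ A, T / 2 ∂μ := by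
            refine setLIntegral_mono measurable_const fun x hx => ?_
            have h2φ : 2 * φ x ≤ T := by
              have := hx.2
              simp only [hA, mem_setOf_eq, not_lt] at this
              exact this
            rw [ENNReal.le_div_iff_mul_le (Or.inl two_ne_zero) (Or.inl ENNReal.ofNat_ne_top),
              mul_comm]
            exact h2φ
        _ = T / 2 * μ (Q \ A) := setLIntegral_const _ _
        _ ≤ T / 2 * μ Q := by gcongr; exact diff_subset
    have h3 : T / 2 * μ Q + T / 2 * μ Q ≤ (∫⁻ x in Q ∩ A, φ x ∂μ) + T / 2 * μ Q := by
      rw [← add_mul, ENNReal.add_halves]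
      calc T * μ Q ≤ ∫⁻ y in Q, φ y ∂μ := h1.le
        _ = _ := hsplit.symm
        _ ≤ _ := add_le_add_right h2 _
    have hfin2 : T / 2 * μ Q ≠ ∞ :=
      ENNReal.mul_ne_top (ENNReal.div_lt_top hTtop two_ne_zero).ne hμt
    have h4 : T / 2 * μ Q ≤ ∫⁻ x in Q ∩ A, φ x ∂μ :=
      (ENNReal.add_le_add_iff_right hfin2).1 h3
    have h5 : μ Q = 2 * T⁻¹ * (T / 2 * μ Q) := by
      rw [div_eq_mul_inv]
      calc μ Q = (2 * 2⁻¹) * (T⁻¹ * T) * μ Q := by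
            rw [ENNReal.mul_inv_cancel two_ne_zero ENNReal.ofNat_ne_top,
                ENNReal.inv_mul_cancel hT0 hTtop, one_mul, one_mul]
        _ = 2 * T⁻¹ * (T * 2⁻¹ * μ Q) := by ring
    rw [h5]
    exact mul_le_mul_right h4 _
  -- covering by maximal cubes
  have cover : {x | T < mx μ F φ x} ⊆ ⋃ Q ∈ M, (Q : Set X) := by
    intro x hx
    simp only [mem_setOf_eq, mx, Finset.lt_sup_iff] at hx
    obtain ⟨Q, hQF, hQlt⟩ := hx
    have hxQ : x ∈ Q := by
      by_contra h
      rw [if_neg h] at hQlt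
      exact (not_lt.2 (zero_le : (0:ℝ≥0∞) ≤ T)) hQlt
    rw [if_pos hxQ] at hQlt
    have hQ𝒬 : Q ∈ 𝒬 := Finset.mem_filter.2 ⟨hQF, hQlt⟩
    obtain ⟨R, hRC, hRmax⟩ := Finset.exists_maximal (s := 𝒬.filter (fun R => Q ⊆ R))
      ⟨Q, Finset.mem_filter.2 ⟨hQ𝒬, subset_rfl⟩⟩
    have hR𝒬 : R ∈ 𝒬 := (Finset.mem_filter.1 hRC).1
    have hQR : Q ⊆ R := (Finset.mem_filter.1 hRC).2
    have hRM : R ∈ M := by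
      refine Finset.mem_filter.2 ⟨hR𝒬, fun R' hR' hRR' => ?_⟩
      by_contra hne
      exact hne (le_antisymm hRR' (hRmax (Finset.mem_filter.2 ⟨hR', hQR.trans hRR'⟩) hRR'))
    exact Set.mem_biUnion hRM (hQR hxQ)
  -- disjointness of maximal cubes
  have hdisjM : (↑M : Set (Set X)).PairwiseDisjoint (fun Q => Q ∩ A) := by
    intro Q hQ R hR hne
    have hQM := Finset.mem_filter.1 (Finset.mem_coe.1 hQ)
    have hRM := Finset.mem_filter.1 (Finset.mem_coe.1 hR)
    have hQF : Q ∈ F := (Finset.mem_filter.1 hQM.1).1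
    have hRF : R ∈ F := (Finset.mem_filter.1 hRM.1).1
    rcases hdy Q hQF R hRF with h | h | h
    · refine Set.disjoint_iff_inter_eq_empty.2 ?_
      rw [Set.eq_empty_iff_forall_notMem] at h ⊢
      intro x hx
      exact h x ⟨hx.1.1, hx.2.1⟩
    · exact absurd (hQM.2 R hRM.1 h) hne
    · exact absurd ((hRM.2 Q hQM.1 h).symm) hne
  calc μ {x | T < mx μ F φ x} ≤ μ (⋃ Q ∈ M, (Q : Set X)) := measure_mono cover
    _ ≤ ∑ Q ∈ M, μ Q := measure_biUnion_finset_le _ _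
    _ ≤ ∑ Q ∈ M, 2 * T⁻¹ * ∫⁻ x in Q ∩ A, φ x ∂μ :=
        Finset.sum_le_sum fun Q hQ => key Q (Finset.mem_filter.1 hQ).1
    _ = 2 * T⁻¹ * ∑ Q ∈ M, ∫⁻ x in Q ∩ A, φ x ∂μ := by rw [Finset.mul_sum]
    _ = 2 * T⁻¹ * ∫⁻ x in ⋃ Q ∈ M, (Q ∩ A), φ x ∂μ := by
        rw [lintegral_biUnion_finset hdisjM
          (fun Q hQ => ((hmeas Q
            (Finset.mem_filter.1 ((Finset.mem_filter.1 hQ).1)).1).inter hAmeas)) φ]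
    _ ≤ 2 * T⁻¹ * ∫⁻ x in A, φ x ∂μ := by
        gcongr
        exact iUnion₂_subset fun Q _ => inter_subset_right

/-- L² bound for the finite dyadic maximal function. -/
lemma mx_L2 (μ : Measure X) (F : Finset (Set X)) (hmeas : ∀ Q ∈ F, MeasurableSet Q)
    (hpos : ∀ Q ∈ F, 0 < μ Q) (hfin : ∀ Q ∈ F, μ Q < ⊤)
    (hdy : ∀ Q ∈ F, ∀ Q' ∈ F, Q ∩ Q' = ∅ ∨ Q ⊆ Q' ∨ Q' ⊆ Q)
    (φ : X → ℝ≥0∞) (hφ : Measurable φ) (hφtop : ∀ x, φ x ≠ ∞)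
    (hQint : ∀ Q ∈ F, ∫⁻ y in Q, φ y ∂μ ≠ ∞) :
    ∫⁻ x, (mx μ F φ x) ^ (2:ℝ) ∂μ ≤ 8 * ∫⁻ x, (φ x) ^ (2:ℝ) ∂μ := by
  have h2r : ∀ b : ℝ≥0∞, b ^ (2:ℝ) = b * b := by
    intro b
    rw [show (2:ℝ) = ((2:ℕ):ℝ) by norm_num, ENNReal.rpow_natCast, sq]
  have hmxlt : ∀ x, mx μ F φ x < ∞ := by
    intro x
    rw [mx, Finset.sup_lt_iff (by simp : (⊥:ℝ≥0∞) < ∞)]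
    intro Q hQ
    split_ifs with hx
    · exact ENNReal.div_lt_top (hQint Q hQ) (hpos Q hQ).ne'
    · simp
  set ν := μ.withDensity φ with hν
  set g : X → ℝ := fun x => (2 * φ x).toReal with hg
  have hgmeas : Measurable g := (hφ.const_mul 2).ennreal_toReal
  have h2φtop : ∀ x, 2 * φ x ≠ ∞ := fun x => ENNReal.mul_ne_top ENNReal.ofNat_ne_top (hφtop x)
  set m : X → ℝ := fun x => (mx μ F φ x).toReal with hm
  have hmmeas : Measurable m := (measurable_mx μ F hmeas φ).ennreal_toReal
  have hmnn : ∀ x, 0 ≤ m x := fun x => ENNReal.toReal_nonneg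
  have hpt : ∀ x, (mx μ F φ x) ^ (2:ℝ) = ENNReal.ofReal (m x ^ (2:ℝ)) := by
    intro x
    show mx μ F φ x ^ (2:ℝ) = ENNReal.ofReal ((mx μ F φ x).toReal ^ (2:ℝ))
    conv_lhs => rw [← ENNReal.ofReal_toReal (hmxlt x).ne]
    rw [ENNReal.ofReal_rpow_of_nonneg ENNReal.toReal_nonneg (by norm_num : (0:ℝ) ≤ 2)]
  have step : (∫⁻ s in Ioi (0:ℝ), μ {a | s < m a} * ENNReal.ofReal (s ^ (2-1:ℝ)))
      ≤ ∫⁻ s in Ioi (0:ℝ), 2 * ν {x | s < g x} := by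
    refine lintegral_mono_ae ?_
    filter_upwards [self_mem_ae_restrict measurableSet_Ioi] with s hs
    have hs0 : (0:ℝ) < s := hs
    have hS0 : ENNReal.ofReal s ≠ 0 := by
      simp only [ne_eq, ENNReal.ofReal_eq_zero, not_le]; exact hs0
    have hStop : ENNReal.ofReal s ≠ ∞ := ENNReal.ofReal_ne_top
    have hset1 : {a | s < m a} = {x | ENNReal.ofReal s < mx μ F φ x} := by
      ext a
      simp only [mem_setOf_eq, hm]
      exact (ENNReal.ofReal_lt_iff_lt_toReal hs0.le (hmxlt a).ne).symm
    have hset2 : {x | ENNReal.ofReal s < 2 * φ x} = {x | s < g x} := by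
      ext x
      simp only [mem_setOf_eq, hg]
      exact ENNReal.ofReal_lt_iff_lt_toReal hs0.le (h2φtop x)
    have hAm : MeasurableSet {x | ENNReal.ofReal s < 2 * φ x} :=
      measurableSet_lt measurable_const (hφ.const_mul 2)
    have hweak := mx_weak μ F hmeas hpos hfin hdy φ hφ hs0
    have hsexp : ENNReal.ofReal (s ^ (2-1:ℝ)) = ENNReal.ofReal s := by
      norm_num
    calc μ {a | s < m a} * ENNReal.ofReal (s ^ (2-1:ℝ))
        = μ {x | ENNReal.ofReal s < mx μ F φ x} * ENNReal.ofReal s := by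
          rw [hset1, hsexp]
      _ ≤ (2 * (ENNReal.ofReal s)⁻¹ *
            ∫⁻ x in {x | ENNReal.ofReal s < 2 * φ x}, φ x ∂μ) * ENNReal.ofReal s :=
          mul_le_mul_left hweak _
      _ = 2 * (∫⁻ x in {x | ENNReal.ofReal s < 2 * φ x}, φ x ∂μ) *
            ((ENNReal.ofReal s)⁻¹ * ENNReal.ofReal s) := by ring
      _ = 2 * ∫⁻ x in {x | ENNReal.ofReal s < 2 * φ x}, φ x ∂μ := by
          rw [ENNReal.inv_mul_cancel hS0 hStop, mul_one]
      _ = 2 * ν {x | s < g x} := by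
          rw [← hset2, hν, withDensity_apply φ hAm]
  calc ∫⁻ x, mx μ F φ x ^ (2:ℝ) ∂μ
      = ∫⁻ x, ENNReal.ofReal (m x ^ (2:ℝ)) ∂μ := lintegral_congr hpt
    _ = ENNReal.ofReal 2 *
          ∫⁻ s in Ioi (0:ℝ), μ {a | s < m a} * ENNReal.ofReal (s ^ (2-1:ℝ)) :=
        lintegral_rpow_eq_lintegral_meas_lt_mul μ (ae_of_all μ hmnn)
          hmmeas.aemeasurable two_pos
    _ ≤ ENNReal.ofReal 2 * ∫⁻ s in Ioi (0:ℝ), 2 * ν {x | s < g x} :=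
        mul_le_mul_right step _
    _ = ENNReal.ofReal 2 * (2 * ∫⁻ s in Ioi (0:ℝ), ν {x | s < g x}) := by
        rw [lintegral_const_mul' 2 _ ENNReal.ofNat_ne_top]
    _ = ENNReal.ofReal 2 * (2 * ∫⁻ x, ENNReal.ofReal (g x) ∂ν) := by
        rw [lintegral_eq_lintegral_meas_lt ν (ae_of_all ν fun x => ENNReal.toReal_nonneg)
          hgmeas.aemeasurable]
    _ = ENNReal.ofReal 2 * (2 * ∫⁻ x, φ x * (2 * φ x) ∂μ) := by
        have : ∫⁻ x, ENNReal.ofReal (g x) ∂ν = ∫⁻ x, 2 * φ x ∂ν :=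
          lintegral_congr fun x => by rw [hg, ENNReal.ofReal_toReal (h2φtop x)]
        rw [this, hν, lintegral_withDensity_eq_lintegral_mul μ hφ (hφ.const_mul 2)]
        rfl
    _ = 8 * ∫⁻ x, (φ x) ^ (2:ℝ) ∂μ := by
        have : ∀ x : X, φ x * (2 * φ x) = 2 * (φ x) ^ (2:ℝ) := fun x => by
          rw [h2r]; ring
        simp_rw [this]
        rw [lintegral_const_mul' 2 _ ENNReal.ofNat_ne_top, ENNReal.ofReal_ofNat]
        ring

/-- Core estimate: L² bound for the sparse operator over a finite family. -/
lemma core (μ : Measure X) (F : Finset (Set X)) (hmeas : ∀ Q ∈ F, MeasurableSet Q)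
    (hpos : ∀ Q ∈ F, 0 < μ Q) (hfin : ∀ Q ∈ F, μ Q < ⊤)
    (hdy : ∀ Q ∈ F, ∀ Q' ∈ F, Q ∩ Q' = ∅ ∨ Q ⊆ Q' ∨ Q' ⊆ Q)
    (E : Set X → Set X) (hE : ∀ Q ∈ F, E Q ⊆ Q) (hEm : ∀ Q ∈ F, MeasurableSet (E Q))
    (hdisj : ∀ Q ∈ F, ∀ Q' ∈ F, Q ≠ Q' → E Q ∩ E Q' = ∅)
    (hsp : ∀ Q ∈ F, μ Q ≤ 2 * μ (E Q))
    (φ : X → ℝ≥0∞) (hφ : Measurable φ) (hφtop : ∀ x, φ x ≠ ∞)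
    (hφ2 : ∫⁻ x, (φ x) ^ (2:ℝ) ∂μ ≠ ∞) :
    ∫⁻ x, (∑ Q ∈ F, ((∫⁻ y in Q, φ y ∂μ) / μ Q) * Q.indicator 1 x) ^ (2:ℝ) ∂μ ≤
      256 * ∫⁻ x, (φ x) ^ (2:ℝ) ∂μ := by
  classical
  have h2r : ∀ b : ℝ≥0∞, b ^ (2:ℝ) = b * b := by
    intro b
    rw [show (2:ℝ) = ((2:ℕ):ℝ) by norm_num, ENNReal.rpow_natCast, sq]
  have hconj : Real.HolderConjugate 2 2 := Real.HolderConjugate.two_two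
  set A : Set X → ℝ≥0∞ := fun Q => (∫⁻ y in Q, φ y ∂μ) / μ Q with hAdef
  set G : X → ℝ≥0∞ := fun x => ∑ Q ∈ F, A Q * Q.indicator 1 x with hGdef
  have hGmeas : Measurable G := by
    refine Finset.measurable_sum F fun Q hQ => ?_
    exact (Measurable.indicator measurable_const (hmeas Q hQ)).const_mul _
  set Y2 := ∫⁻ x, φ x ^ (2:ℝ) ∂μ with hY2
  -- cube integrals of φ are finite (Cauchy-Schwarz)
  have hQint : ∀ Q ∈ F, ∫⁻ y in Q, φ y ∂μ ≠ ∞ := by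
    intro Q hQ
    have h1 : (∫⁻ y, ((φ * fun _ => (1:ℝ≥0∞)) : X → ℝ≥0∞) y ∂(μ.restrict Q))
        = ∫⁻ y in Q, φ y ∂μ := by
      simp [Pi.mul_apply]
    have hH := ENNReal.lintegral_mul_le_Lp_mul_Lq (μ.restrict Q) hconj
      hφ.aemeasurable (aemeasurable_const (b := (1:ℝ≥0∞)))
    rw [← h1]
    refine ne_top_of_le_ne_top ?_ hH
    have e1 : (∫⁻ a, φ a ^ (2:ℝ) ∂(μ.restrict Q)) ^ (1/2:ℝ) ≠ ∞ :=
      ENNReal.rpow_ne_top_of_nonneg (by norm_num)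
        (ne_top_of_le_ne_top hφ2 (setLIntegral_le_lintegral Q _))
    have e2 : (∫⁻ _, (1:ℝ≥0∞) ^ (2:ℝ) ∂(μ.restrict Q)) ^ (1/2:ℝ) ≠ ∞ := by
      simp only [ENNReal.one_rpow, lintegral_one, Measure.restrict_apply_univ]
      exact ENNReal.rpow_ne_top_of_nonneg (by norm_num) (hfin Q hQ).ne
    exact ENNReal.mul_ne_top e1 e2
  have hAfin : ∀ Q ∈ F, A Q ≠ ∞ := fun Q hQ =>
    (ENNReal.div_lt_top (hQint Q hQ) (hpos Q hQ).ne').ne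
  -- G is bounded and compactly supported in measure
  set c : ℝ≥0∞ := ∑ Q ∈ F, A Q with hc
  have hcfin : c ≠ ∞ :=
    (ENNReal.sum_lt_top.2 fun Q hQ => (hAfin Q hQ).lt_top).ne
  have hGle : ∀ x, G x ≤ c := by
    intro x
    refine Finset.sum_le_sum fun Q hQ => ?_
    by_cases hx : x ∈ Q <;> simp [hx]
  have hGtop : ∀ x, G x ≠ ∞ := fun x => (lt_of_le_of_lt (hGle x) hcfin.lt_top).ne
  set U := ⋃ Q ∈ F, (Q : Set X) with hU
  have hUmeas : MeasurableSet U := Finset.measurableSet_biUnion F hmeas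
  have hμU : μ U ≠ ∞ := by
    refine (lt_of_le_of_lt (measure_biUnion_finset_le F id) ?_).ne
    exact ENNReal.sum_lt_top.2 fun Q hQ => hfin Q hQ
  have hGzero : ∀ x, x ∉ U → G x = 0 := by
    intro x hx
    refine Finset.sum_eq_zero fun Q hQ => ?_
    have hxQ : x ∉ Q := fun h => hx (Set.mem_biUnion hQ h)
    simp [hxQ]
  set I := ∫⁻ x, G x ^ (2:ℝ) ∂μ with hI
  have hG2fin : I ≠ ∞ := by
    have hle : ∀ x, G x ^ (2:ℝ) ≤ c ^ (2:ℝ) * U.indicator 1 x := by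
      intro x
      by_cases hx : x ∈ U
      · simp only [Set.indicator_of_mem hx, Pi.one_apply, mul_one]
        exact ENNReal.rpow_le_rpow (hGle x) (by norm_num)
      · rw [hGzero x hx, Set.indicator_of_notMem hx, mul_zero,
          ENNReal.zero_rpow_of_pos (by norm_num)]
    refine ne_top_of_le_ne_top ?_ (lintegral_mono hle)
    rw [lintegral_const_mul' _ _ (ENNReal.rpow_ne_top_of_nonneg (by norm_num) hcfin),
      lintegral_indicator_one hUmeas]
    exact ENNReal.mul_ne_top (ENNReal.rpow_ne_top_of_nonneg (by norm_num) hcfin) hμU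
  -- expand the square
  have hGsq : ∀ x, G x ^ (2:ℝ) = ∑ Q ∈ F, A Q * (Q.indicator G x) := by
    intro x
    rw [h2r]
    calc G x * G x = ∑ Q ∈ F, (A Q * Q.indicator 1 x) * G x := by
          simp only [hGdef]
          exact Finset.sum_mul _ _ _
      _ = ∑ Q ∈ F, A Q * (Q.indicator G x) := by
          refine Finset.sum_congr rfl fun Q _ => ?_
          by_cases hx : x ∈ Q <;> simp [hx, mul_assoc]
  have step1 : I = ∑ Q ∈ F, A Q * ∫⁻ y in Q, G y ∂μ := by
    rw [hI, lintegral_congr hGsq,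
      lintegral_finset_sum F (fun Q hQ => ((hGmeas.indicator (hmeas Q hQ)).const_mul _))]
    refine Finset.sum_congr rfl fun Q hQ => ?_
    rw [lintegral_const_mul' _ _ (hAfin Q hQ), lintegral_indicator (hmeas Q hQ)]
  set B : Set X → ℝ≥0∞ := fun Q => (∫⁻ y in Q, G y ∂μ) / μ Q with hBdef
  have hBmul : ∀ Q ∈ F, ∫⁻ y in Q, G y ∂μ = B Q * μ Q := fun Q hQ =>
    (ENNReal.div_mul_cancel (hpos Q hQ).ne' (hfin Q hQ).ne).symm
  have step2 : ∑ Q ∈ F, A Q * ∫⁻ y in Q, G y ∂μ ≤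
      ∑ Q ∈ F, 2 * ((A Q * B Q) * μ (E Q)) := by
    refine Finset.sum_le_sum fun Q hQ => ?_
    rw [hBmul Q hQ]
    calc A Q * (B Q * μ Q) ≤ A Q * (B Q * (2 * μ (E Q))) := by
          exact mul_le_mul_right (mul_le_mul_right (hsp Q hQ) _) _
      _ = 2 * ((A Q * B Q) * μ (E Q)) := by ring
  have step3 : ∀ Q ∈ F, (A Q * B Q) * μ (E Q) ≤
      ∫⁻ x in E Q, mx μ F φ x * mx μ F G x ∂μ := by
    intro Q hQ
    refine le_trans (le_of_eq (setLIntegral_const (E Q) _).symm)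
      (setLIntegral_mono ((measurable_mx μ F hmeas φ).mul (measurable_mx μ F hmeas G))
        fun x hx => ?_)
    exact mul_le_mul' (mx_le_of_mem hQ (hE Q hQ hx)) (mx_le_of_mem hQ (hE Q hQ hx))
  have hEdisj : (↑F : Set (Set X)).PairwiseDisjoint E := by
    intro Q hQ R hR hne
    refine Set.disjoint_iff_inter_eq_empty.2 ?_
    exact hdisj Q (Finset.mem_coe.1 hQ) R (Finset.mem_coe.1 hR) hne
  have step4 : ∑ Q ∈ F, ∫⁻ x in E Q, mx μ F φ x * mx μ F G x ∂μ ≤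
      ∫⁻ x, mx μ F φ x * mx μ F G x ∂μ := by
    rw [← lintegral_biUnion_finset hEdisj (fun Q hQ => hEm Q hQ) _]
    exact setLIntegral_le_lintegral _ _
  -- Hölder and the maximal function bounds
  have hQintG : ∀ Q ∈ F, ∫⁻ y in Q, G y ∂μ ≠ ∞ := by
    intro Q hQ
    have : ∫⁻ y in Q, G y ∂μ ≤ c * μ Q := by
      refine le_trans (setLIntegral_mono measurable_const fun x _ => hGle x) ?_
      rw [setLIntegral_const]
    exact (lt_of_le_of_lt this (ENNReal.mul_lt_top hcfin.lt_top (hfin Q hQ))).ne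
  have hMφ := mx_L2 μ F hmeas hpos hfin hdy φ hφ hφtop hQint
  have hMG := mx_L2 μ F hmeas hpos hfin hdy G hGmeas hGtop hQintG
  have hHolder : ∫⁻ x, mx μ F φ x * mx μ F G x ∂μ ≤
      (∫⁻ x, mx μ F φ x ^ (2:ℝ) ∂μ) ^ (1/2:ℝ) *
      (∫⁻ x, mx μ F G x ^ (2:ℝ) ∂μ) ^ (1/2:ℝ) := by
    have := ENNReal.lintegral_mul_le_Lp_mul_Lq μ hconj
      (measurable_mx μ F hmeas φ).aemeasurable (measurable_mx μ F hmeas G).aemeasurable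
    simpa using this
  have main : I ≤ 16 * Y2 ^ (1/2:ℝ) * I ^ (1/2:ℝ) := by
    have h8 : (8:ℝ≥0∞) ^ (1/2:ℝ) * 8 ^ (1/2:ℝ) = 8 := by
      rw [← ENNReal.rpow_add _ _ (by norm_num) (by norm_num)]
      norm_num
    calc I = ∑ Q ∈ F, A Q * ∫⁻ y in Q, G y ∂μ := step1
      _ ≤ ∑ Q ∈ F, 2 * ((A Q * B Q) * μ (E Q)) := step2
      _ = 2 * ∑ Q ∈ F, (A Q * B Q) * μ (E Q) := by rw [Finset.mul_sum]
      _ ≤ 2 * ∑ Q ∈ F, ∫⁻ x in E Q, mx μ F φ x * mx μ F G x ∂μ :=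
          mul_le_mul_right (Finset.sum_le_sum step3) _
      _ ≤ 2 * ∫⁻ x, mx μ F φ x * mx μ F G x ∂μ := mul_le_mul_right step4 _
      _ ≤ 2 * ((∫⁻ x, mx μ F φ x ^ (2:ℝ) ∂μ) ^ (1/2:ℝ) *
            (∫⁻ x, mx μ F G x ^ (2:ℝ) ∂μ) ^ (1/2:ℝ)) := mul_le_mul_right hHolder _
      _ ≤ 2 * ((8 * Y2) ^ (1/2:ℝ) * (8 * I) ^ (1/2:ℝ)) := by
          refine mul_le_mul_right (mul_le_mul'
            (ENNReal.rpow_le_rpow hMφ (by norm_num))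
            (ENNReal.rpow_le_rpow hMG (by norm_num))) _
      _ = 16 * Y2 ^ (1/2:ℝ) * I ^ (1/2:ℝ) := by
          rw [ENNReal.mul_rpow_of_nonneg _ _ (by norm_num : (0:ℝ) ≤ 1/2),
            ENNReal.mul_rpow_of_nonneg _ _ (by norm_num : (0:ℝ) ≤ 1/2)]
          calc 2 * (8 ^ (1/2:ℝ) * Y2 ^ (1/2:ℝ) * (8 ^ (1/2:ℝ) * I ^ (1/2:ℝ)))
              = 2 * (8 ^ (1/2:ℝ) * 8 ^ (1/2:ℝ)) * Y2 ^ (1/2:ℝ) * I ^ (1/2:ℝ) := by ring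
            _ = 16 * Y2 ^ (1/2:ℝ) * I ^ (1/2:ℝ) := by rw [h8]; norm_num
  -- conclude by dividing
  by_cases hI0 : I = 0
  · rw [hI0]; exact zero_le
  by_cases hY0 : Y2 = 0
  · exfalso
    apply hI0
    have : I ≤ 0 := by
      have := main
      rw [hY0, ENNReal.zero_rpow_of_pos (by norm_num)] at this
      simpa using this
    simpa using this
  have hIsplit : I = I ^ (1/2:ℝ) * I ^ (1/2:ℝ) := by
    rw [← ENNReal.rpow_add _ _ hI0 hG2fin]
    norm_num
  have hdiv : I ^ (1/2:ℝ) ≤ 16 * Y2 ^ (1/2:ℝ) := by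
    rw [← ENNReal.mul_le_mul_iff_left (c := I ^ (1/2:ℝ))
      (by simp [ENNReal.rpow_eq_zero_iff, hI0, hG2fin]) (ENNReal.rpow_ne_top_of_nonneg (by norm_num) hG2fin)]
    calc I ^ (1/2:ℝ) * I ^ (1/2:ℝ) = I := hIsplit.symm
      _ ≤ 16 * Y2 ^ (1/2:ℝ) * I ^ (1/2:ℝ) := main
  calc I = I ^ (1/2:ℝ) * I ^ (1/2:ℝ) := hIsplit
    _ ≤ (16 * Y2 ^ (1/2:ℝ)) * (16 * Y2 ^ (1/2:ℝ)) := mul_le_mul' hdiv hdiv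
    _ = 256 * (Y2 ^ (1/2:ℝ) * Y2 ^ (1/2:ℝ)) := by ring
    _ = 256 * Y2 := by
        rw [← ENNReal.rpow_add _ _ hY0 hφ2]
        norm_num

lemma iSup_sq {ι : Type*} (a : ι → ℝ≥0∞) (hd : Directed (· ≤ ·) a) :
    (⨆ i, a i) ^ (2:ℝ) = ⨆ i, (a i) ^ (2:ℝ) := by
  have h2 : ∀ b : ℝ≥0∞, b ^ (2:ℝ) = b * b := by
    intro b
    rw [show (2:ℝ) = ((2:ℕ):ℝ) by norm_num, ENNReal.rpow_natCast, sq]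
  simp only [h2]
  apply le_antisymm
  · rw [ENNReal.iSup_mul]
    refine iSup_le fun i => ?_
    rw [ENNReal.mul_iSup]
    refine iSup_le fun j => ?_
    obtain ⟨k, hik, hjk⟩ := hd i j
    exact le_iSup_of_le k (mul_le_mul' hik hjk)
  · exact iSup_le fun i => mul_le_mul' (le_iSup a i) (le_iSup a i)

end SparseAux

/-- A sparse operator associated to a sparse family `S` of dyadic cubes is bounded on
`L²(μ)` with an absolute constant. -/
theorem sparse_operator_L2_bounded :
    ∃ Cc : ℝ, 0 < Cc ∧
      ∀ (X : Type) (_ : MeasurableSpace X) (μ : Measure X)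
        (D : Set (Set X)), D.Countable →
        (∀ Q ∈ D, MeasurableSet Q) →
        (∀ Q ∈ D, 0 < μ Q ∧ μ Q < ⊤) →
        (∀ Q ∈ D, ∀ Q' ∈ D, Q ∩ Q' = ∅ ∨ Q ⊆ Q' ∨ Q' ⊆ Q) →
        ∀ (S : Set (Set X)), S ⊆ D →
        ∀ (E : Set X → Set X),
          (∀ Q ∈ S, E Q ⊆ Q) →
          (∀ Q ∈ S, MeasurableSet (E Q)) →
          (∀ Q ∈ S, ∀ Q' ∈ S, Q ≠ Q' → E Q ∩ E Q' = ∅) →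
          (∀ Q ∈ S, μ Q ≤ 2 * μ (E Q)) →
          ∀ f : X → ℝ, Measurable f → (∀ x, 0 ≤ f x) → MemLp f 2 μ →
            eLpNorm
              (fun x => ∑' Q : S,
                (((μ (Q : Set X)).toReal)⁻¹ * ∫ y in (Q : Set X), f y ∂μ) *
                  (Q : Set X).indicator (fun _ => (1 : ℝ)) x) 2 μ
              ≤ ENNReal.ofReal Cc * eLpNorm f 2 μ := by
  classical
  refine ⟨16, by norm_num, ?_⟩
  intro X mX μ D hDc hDmeas hDpf hDdy S hSD E hES hEmeas hEdisj hsp f hfmeas hfnn hfL2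
  set f' : X → ℝ≥0∞ := fun x => ENNReal.ofReal (f x) with hf'
  have hf'meas : Measurable f' := hfmeas.ennreal_ofReal
  have hf'top : ∀ x, f' x ≠ ∞ := fun _ => ENNReal.ofReal_ne_top
  have hfnorm : ∀ x, (‖f x‖₊ : ℝ≥0∞) = f' x := fun x => Real.enorm_eq_ofReal (hfnn x)
  have heLp : eLpNorm f 2 μ = (∫⁻ x, f' x ^ (2:ℝ) ∂μ) ^ (1/2:ℝ) := by
    rw [eLpNorm_eq_lintegral_rpow_enorm_toReal (by norm_num) (by norm_num),
      show ((2:ℝ≥0∞).toReal) = (2:ℝ) from by simp]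
    exact congrArg (· ^ (1/2:ℝ)) (lintegral_congr fun x => congrArg (· ^ (2:ℝ)) (hfnorm x))
  set Y2 := ∫⁻ x, f' x ^ (2:ℝ) ∂μ with hY2
  have hY2fin : Y2 ≠ ∞ := by
    intro h
    have h2 := hfL2.2
    rw [heLp, h] at h2
    rw [ENNReal.top_rpow_of_pos (by norm_num)] at h2
    exact (lt_irrefl _ h2).elim
  set A : Set X → ℝ≥0∞ := fun Q => (∫⁻ y in Q, f' y ∂μ) / μ Q with hA
  have hScount : S.Countable := hDc.mono hSD
  haveI : Countable ↥S := hScount.to_subtype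
  -- identification of the real coefficients with ENNReal averages
  have hcoeff : ∀ Q ∈ S, ∀ x : X, ENNReal.ofReal
      ((((μ Q).toReal)⁻¹ * ∫ y in Q, f y ∂μ) * Q.indicator (fun _ => (1:ℝ)) x)
      = A Q * Q.indicator 1 x := by
    intro Q hQ x
    have hQD := hSD hQ
    have hposQ := (hDpf Q hQD).1
    have hfinQ := (hDpf Q hQD).2
    have hint : IntegrableOn f Q μ := by
      haveI : IsFiniteMeasure (μ.restrict Q) :=
        ⟨by rwa [Measure.restrict_apply_univ]⟩
      exact memLp_one_iff_integrable.mp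
        ((hfL2.restrict Q).mono_exponent (by norm_num))
    have hig : ENNReal.ofReal (∫ y in Q, f y ∂μ) = ∫⁻ y in Q, f' y ∂μ :=
      ofReal_integral_eq_lintegral_ofReal hint (ae_of_all _ hfnn)
    have hinv : ENNReal.ofReal (((μ Q).toReal)⁻¹) = (μ Q)⁻¹ := by
      rw [ENNReal.ofReal_inv_of_pos (ENNReal.toReal_pos hposQ.ne' hfinQ.ne),
        ENNReal.ofReal_toReal hfinQ.ne]
    by_cases hx : x ∈ Q
    · simp only [Set.indicator_of_mem hx, Pi.one_apply, mul_one]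
      rw [ENNReal.ofReal_mul (inv_nonneg.2 ENNReal.toReal_nonneg), hig, hinv]
      simp only [hA, div_eq_mul_inv]
      ring
    · simp [hx]
  set Trf : X → ℝ := fun x => ∑' Q : S,
      (((μ (Q : Set X)).toReal)⁻¹ * ∫ y in (Q : Set X), f y ∂μ) *
        (Q : Set X).indicator (fun _ => (1 : ℝ)) x with hTrf
  have htermnn : ∀ x : X, ∀ Q : S, 0 ≤
      (((μ (Q : Set X)).toReal)⁻¹ * ∫ y in (Q : Set X), f y ∂μ) *
        (Q : Set X).indicator (fun _ => (1 : ℝ)) x := by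
    intro x Q
    refine mul_nonneg (mul_nonneg (inv_nonneg.2 ENNReal.toReal_nonneg)
      (integral_nonneg hfnn)) ?_
    exact Set.indicator_nonneg (fun _ _ => zero_le_one) x
  have hTrfnn : ∀ x, 0 ≤ Trf x := fun x => tsum_nonneg (htermnn x)
  set Gt : X → ℝ≥0∞ := fun x => ∑' Q : S, A (Q : Set X) * (Q : Set X).indicator 1 x
    with hGt
  have hdom : ∀ x, ENNReal.ofReal (Trf x) ≤ Gt x := by
    intro x
    by_cases hs : Summable (fun Q : S =>
      (((μ (Q : Set X)).toReal)⁻¹ * ∫ y in (Q : Set X), f y ∂μ) *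
        (Q : Set X).indicator (fun _ => (1 : ℝ)) x)
    · simp only [hTrf, hGt]
      rw [ENNReal.ofReal_tsum_of_nonneg (htermnn x) hs]
      exact le_of_eq (tsum_congr fun Q => hcoeff (Q : Set X) Q.2 x)
    · simp only [hTrf]
      rw [tsum_eq_zero_of_not_summable hs]
      simp
  have hTnorm : eLpNorm Trf 2 μ =
      (∫⁻ x, (ENNReal.ofReal (Trf x)) ^ (2:ℝ) ∂μ) ^ (1/2:ℝ) := by
    rw [eLpNorm_eq_lintegral_rpow_enorm_toReal (by norm_num) (by norm_num),
      show ((2:ℝ≥0∞).toReal) = (2:ℝ) from by simp]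
    exact congrArg (· ^ (1/2:ℝ))
      (lintegral_congr fun x => by rw [Real.enorm_eq_ofReal (hTrfnn x)])
  -- the main estimate for Gt, via finite subfamilies
  have hGt2 : ∫⁻ x, Gt x ^ (2:ℝ) ∂μ ≤ 256 * Y2 := by
    set g : Finset ↥S → X → ℝ≥0∞ :=
      fun s x => ∑ q ∈ s, A (↑q : Set X) * (↑q : Set X).indicator 1 x with hg
    have hgmeas : ∀ s, Measurable (g s) := fun s =>
      Finset.measurable_sum s fun q _ =>
        (Measurable.indicator measurable_const (hDmeas _ (hSD q.2))).const_mul _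
    have hgdirect : ∀ x : X, Directed (· ≤ ·) (fun s => g s x) := by
      intro x s s'
      exact ⟨s ∪ s',
        Finset.sum_le_sum_of_subset Finset.subset_union_left,
        Finset.sum_le_sum_of_subset Finset.subset_union_right⟩
    have hsupsq : ∀ x, Gt x ^ (2:ℝ) = ⨆ s : Finset ↥S, (g s x) ^ (2:ℝ) := by
      intro x
      have : Gt x = ⨆ s : Finset ↥S, g s x := ENNReal.tsum_eq_iSup_sum
      rw [this, SparseAux.iSup_sq _ (hgdirect x)]
    have hdir2 : Directed (· ≤ ·) (fun s => fun x => (g s x) ^ (2:ℝ)) := by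
      intro s s'
      refine ⟨s ∪ s', fun x => ?_, fun x => ?_⟩ <;>
        exact ENNReal.rpow_le_rpow
          (Finset.sum_le_sum_of_subset (by simp [Finset.subset_union_left,
            Finset.subset_union_right])) (by norm_num)
    have hcore : ∀ s : Finset ↥S, ∫⁻ x, (g s x) ^ (2:ℝ) ∂μ ≤ 256 * Y2 := by
      intro s
      set F : Finset (Set X) := s.image Subtype.val with hF
      have hmemS : ∀ Q ∈ F, Q ∈ S := by
        intro Q hQ
        obtain ⟨q, _, rfl⟩ := Finset.mem_image.1 hQ
        exact q.2
      have hgF : ∀ x, g s x = ∑ Q ∈ F, A Q * Q.indicator 1 x := by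
        intro x
        rw [hF, Finset.sum_image (fun q _ q' _ h => Subtype.ext h)]
      have := SparseAux.core μ F
        (fun Q hQ => hDmeas Q (hSD (hmemS Q hQ)))
        (fun Q hQ => (hDpf Q (hSD (hmemS Q hQ))).1)
        (fun Q hQ => (hDpf Q (hSD (hmemS Q hQ))).2)
        (fun Q hQ Q' hQ' => hDdy Q (hSD (hmemS Q hQ)) Q' (hSD (hmemS Q' hQ')))
        E (fun Q hQ => hES Q (hmemS Q hQ)) (fun Q hQ => hEmeas Q (hmemS Q hQ))
        (fun Q hQ Q' hQ' => hEdisj Q (hmemS Q hQ) Q' (hmemS Q' hQ'))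
        (fun Q hQ => hsp Q (hmemS Q hQ))
        f' hf'meas hf'top hY2fin
      calc ∫⁻ x, (g s x) ^ (2:ℝ) ∂μ
          = ∫⁻ x, (∑ Q ∈ F, ((∫⁻ y in Q, f' y ∂μ) / μ Q) * Q.indicator 1 x) ^ (2:ℝ) ∂μ :=
            lintegral_congr fun x => by rw [hgF x]
        _ ≤ 256 * Y2 := this
    calc ∫⁻ x, Gt x ^ (2:ℝ) ∂μ
        = ∫⁻ x, ⨆ s : Finset ↥S, (g s x) ^ (2:ℝ) ∂μ := lintegral_congr hsupsq
      _ = ⨆ s : Finset ↥S, ∫⁻ x, (g s x) ^ (2:ℝ) ∂μ :=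
          lintegral_iSup_directed (fun s => ((hgmeas s).pow_const _).aemeasurable) hdir2
      _ ≤ 256 * Y2 := iSup_le hcore
  -- put everything together
  have h256 : ((256:ℝ≥0∞)) ^ (1/2:ℝ) = 16 := by
    rw [show (256:ℝ≥0∞) = 16 ^ ((2:ℕ):ℝ) from by rw [ENNReal.rpow_natCast]; norm_num,
      ← ENNReal.rpow_mul]
    norm_num
  calc eLpNorm Trf 2 μ
      = (∫⁻ x, (ENNReal.ofReal (Trf x)) ^ (2:ℝ) ∂μ) ^ (1/2:ℝ) := hTnorm
    _ ≤ (∫⁻ x, Gt x ^ (2:ℝ) ∂μ) ^ (1/2:ℝ) :=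
        ENNReal.rpow_le_rpow (lintegral_mono fun x =>
          ENNReal.rpow_le_rpow (hdom x) (by norm_num)) (by norm_num)
    _ ≤ (256 * Y2) ^ (1/2:ℝ) := ENNReal.rpow_le_rpow hGt2 (by norm_num)
    _ = 16 * Y2 ^ (1/2:ℝ) := by
        rw [ENNReal.mul_rpow_of_nonneg _ _ (by norm_num : (0:ℝ) ≤ 1/2), h256]
    _ = ENNReal.ofReal 16 * eLpNorm f 2 μ := by
        rw [heLp, ENNReal.ofReal_ofNat]
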